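/- Let X₁,…,Xₙ be independent real-valued random variables, each Xᵢ uniformly distributed on a set of kᵢ points that are pairwise at distance at least 2. Then for every integer ℓ ≥ 1 and every x ∈ ℝ, P(X₁+⋯+Xₙ ∈ (x-ℓ, x+ℓ]) ≤ P(T₁+⋯+Tₙ ∈ (-ℓ, ℓ]), where Tᵢ are independent and Tᵢ is uniform on the arithmetic progression {-kᵢ+1, -kᵢ+3, …, kᵢ-1}. -/

import Mathlib

open MeasureTheory ProbabilityTheory
open scoped ENNReal NNReal

/-- The Lévy concentration function `Q_h(μ) = sup_x μ((x, x+h])`. -/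
noncomputable def conc (μ : Measure ℝ) (h : ℝ) : ℝ≥0∞ :=
  ⨆ x : ℝ, μ (Set.Ioc x (x + h))

/-- `nu k` is the uniform distribution on the arithmetic progression `{-k+1, -k+3, …, k-1}`. -/
noncomputable def nu (k : ℕ) : Measure ℝ :=
  (k : ℝ≥0∞)⁻¹ • ∑ i ∈ Finset.range k, Measure.dirac (2 * (i : ℝ) - k + 1)

instance nu_fin (k : ℕ) : IsFiniteMeasure (nu k) := by
  constructor
  rw [nu, Measure.smul_apply, Measure.coe_finset_sum, Finset.sum_apply]
  simp only [Measure.dirac_apply' _ MeasurableSet.univ, Set.indicator_univ, Pi.one_apply,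
    Finset.sum_const, Finset.card_range, smul_eq_mul, nsmul_eq_mul, mul_one]
  rcases Nat.eq_zero_or_pos k with h | h
  · simp [h]
  · rw [ENNReal.inv_mul_cancel (by exact_mod_cast h.ne' : (k:ℝ≥0∞) ≠ 0) (by simp)]
    exact ENNReal.one_lt_top



open Finset MeasureTheory
open scoped ENNReal NNReal

namespace USC

/-- `c` has consecutive gaps ≥ 2 on `[0, R)`. -/
def Sep (c : ℕ → ℝ) (R : ℕ) : Prop := ∀ q, q + 1 < R → c q + 2 ≤ c (q + 1)

lemma Sep.mono {c : ℕ → ℝ} {R R' : ℕ} (h : Sep c R) (hR : R' ≤ R) : Sep c R' :=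
  fun q hq => h q (lt_of_lt_of_le hq hR)

lemma Sep.le {c : ℕ → ℝ} {R : ℕ} (h : Sep c R) :
    ∀ d p, p + d < R → c p + 2 * d ≤ c (p + d) := by
  intro d
  induction d with
  | zero => intro p _; simp
  | succ d ih =>
    intro p hp
    have h1 := ih p (by omega)
    have h2 := h (p + d) (by omega)
    have he : p + (d + 1) = (p + d) + 1 := by omega
    rw [he]
    push_cast
    push_cast at h1
    linarith

noncomputable def APset (k : ℕ) : Finset ℝ := (range k).image (fun i : ℕ => 2 * (i : ℝ) - k + 1)

lemma APinj (k : ℕ) : Function.Injective (fun i : ℕ => 2 * (i : ℝ) - k + 1) := by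
  intro i j hij
  simp only at hij
  have : (i : ℝ) = j := by linarith
  exact_mod_cast this

open scoped Classical in
noncomputable def cnt (ℓ : ℕ) (n : ℕ) (s : Fin n → Finset ℝ) (c : ℝ) : ℕ :=
  ∑ a ∈ Fintype.piFinset s, if (∑ i, a i) ∈ Set.Ioc (c - ℓ) (c + ℓ) then 1 else 0

lemma cnt_zero (ℓ : ℕ) (s : Fin 0 → Finset ℝ) (c : ℝ) :
    cnt ℓ 0 s c = if -(ℓ : ℝ) ≤ c ∧ c < ℓ then 1 else 0 := by
  classical
  rw [cnt]
  have hu : Fintype.piFinset s = {fun i : Fin 0 => (0 : ℝ)} := by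
    apply Finset.eq_singleton_iff_unique_mem.mpr
    refine ⟨Fintype.mem_piFinset.mpr (fun i => i.elim0), fun a _ => funext fun i => i.elim0⟩
  rw [hu, Finset.sum_singleton]
  rw [show (∑ i : Fin 0, (0 : ℝ)) = 0 by simp]
  apply if_congr _ rfl rfl
  rw [Set.mem_Ioc]
  constructor
  · rintro ⟨h1, h2⟩; exact ⟨by linarith, by linarith⟩
  · rintro ⟨h1, h2⟩; exact ⟨by linarith, by linarith⟩

lemma cnt_succ (ℓ : ℕ) (n : ℕ) (s : Fin (n + 1) → Finset ℝ) (c : ℝ) :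
    cnt ℓ (n + 1) s c = ∑ y ∈ s 0, cnt ℓ n (fun i => s i.succ) (c - y) := by
  classical
  rw [cnt]
  have h1 : ∑ a ∈ Fintype.piFinset s,
        (if (∑ i, a i) ∈ Set.Ioc (c - ℓ) (c + ℓ) then 1 else 0)
      = ∑ p ∈ (s 0) ×ˢ Fintype.piFinset (fun i => s i.succ),
        (if (∑ i, Fin.cons p.1 p.2 i) ∈ Set.Ioc (c - ℓ) (c + ℓ) then 1 else 0) := by
    apply Finset.sum_nbij' (i := fun a => (a 0, Fin.tail a)) (j := fun p => Fin.cons p.1 p.2)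
    · intro a ha
      rw [Fin.mem_piFinset_iff_zero_tail] at ha
      simpa [Finset.mem_product, Fin.tail] using ha
    · intro p hp
      rw [Finset.mem_product] at hp
      rw [Fin.mem_piFinset_iff_zero_tail]
      simpa [Fin.tail_cons, Fin.tail] using hp
    · intro a _; exact Fin.cons_self_tail a
    · intro p _; ext <;> simp [Fin.tail_cons]
    · intro a _
      rw [Fin.cons_self_tail]
  rw [h1, Finset.sum_product]
  apply Finset.sum_congr rfl
  intro y _
  rw [cnt]
  apply Finset.sum_congr rfl
  intro b _
  apply if_congr _ rfl rfl
  rw [Fin.sum_cons, Set.mem_Ioc, Set.mem_Ioc]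
  constructor
  · rintro ⟨h1, h2⟩; constructor <;> linarith
  · rintro ⟨h1, h2⟩; constructor <;> linarith

lemma base_le {ℓ R : ℕ} (hℓ : 1 ≤ ℓ) {c : ℕ → ℝ} (hc : Sep c R) :
    (∑ j ∈ range R, if -(ℓ : ℝ) ≤ c j ∧ c j < ℓ then 1 else 0) ≤ min R ℓ := by
  classical
  rw [Finset.sum_boole]
  rcases Finset.eq_empty_or_nonempty ((range R).filter (fun j => -(ℓ:ℝ) ≤ c j ∧ c j < ℓ))
    with he | hne
  · rw [he]; simp
  · set S := (range R).filter (fun j => -(ℓ:ℝ) ≤ c j ∧ c j < ℓ) with hS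
    have hsub : S ⊆ Finset.Ico (S.min' hne) (S.min' hne + ℓ) := by
      intro j hj
      have hj0 : S.min' hne ∈ S := Finset.min'_mem _ _
      have hle : S.min' hne ≤ j := Finset.min'_le _ _ hj
      obtain ⟨hjR, hj1, hj2⟩ : j ∈ range R ∧ -(ℓ:ℝ) ≤ c j ∧ c j < ℓ := by
        simpa using Finset.mem_filter.mp hj
      obtain ⟨hj0R, hj01, hj02⟩ : S.min' hne ∈ range R ∧ -(ℓ:ℝ) ≤ c (S.min' hne) ∧ c (S.min' hne) < ℓ := by
        simpa using Finset.mem_filter.mp hj0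
      rw [Finset.mem_range] at hjR hj0R
      rw [Finset.mem_Ico]
      refine ⟨hle, ?_⟩
      by_contra hcon
      push_neg at hcon
      have := hc.le (j - S.min' hne) (S.min' hne) (by omega)
      rw [show S.min' hne + (j - S.min' hne) = j by omega] at this
      have hcast : (ℓ : ℝ) ≤ (j - S.min' hne : ℕ) := by exact_mod_cast (by omega : ℓ ≤ j - S.min' hne)
      linarith
    have h1 : S.card ≤ ℓ := by
      have := Finset.card_le_card hsub
      simpa using this
    have h2 : S.card ≤ R := by
      have := Finset.card_le_card (Finset.filter_subset (fun j => -(ℓ:ℝ) ≤ c j ∧ c j < ℓ) (range R))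
      simpa using this
    simp only [Nat.cast_id]
    omega

lemma base_ge {ℓ R : ℕ} (hℓ : 1 ≤ ℓ) :
    min R ℓ ≤ (range R).sum
      (fun j : ℕ => if -(ℓ : ℝ) ≤ 2 * (j : ℝ) - R + 1 ∧ 2 * (j : ℝ) - R + 1 < ℓ then 1 else 0) := by
  classical
  rw [Finset.sum_boole]
  simp only [Nat.cast_id]
  rcases le_or_gt R ℓ with h | h
  · have : (range R).filter (fun j : ℕ => -(ℓ:ℝ) ≤ 2 * (j : ℝ) - R + 1 ∧ 2 * (j : ℝ) - R + 1 < ℓ)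
        = range R := by
      apply Finset.filter_true_of_mem
      intro j hj
      rw [Finset.mem_range] at hj
      have h1 : (j : ℝ) ≥ 0 := by positivity
      have h2 : (2 * j : ℝ) ≤ 2 * R - 2 := by
        have hj1 : j + 1 ≤ R := hj
        have : (j : ℝ) + 1 ≤ R := by exact_mod_cast hj1
        linarith
      have h3 : (R : ℝ) ≤ ℓ := by exact_mod_cast h
      constructor <;> [linarith; linarith]
    rw [this, Finset.card_range]
    omega
  · set js := (R - ℓ) / 2 with hjs
    have hsub : Finset.Ico js (js + ℓ) ⊆
        (range R).filter (fun j : ℕ => -(ℓ:ℝ) ≤ 2 * (j : ℝ) - R + 1 ∧ 2 * (j : ℝ) - R + 1 < ℓ) := by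
      intro j hj
      rw [Finset.mem_Ico] at hj
      rw [Finset.mem_filter, Finset.mem_range]
      have hn1 : R ≤ 2 * j + ℓ + 1 := by omega
      have hn2 : 2 * j + 2 ≤ R + ℓ := by omega
      have hr1 : (R : ℝ) ≤ 2 * j + ℓ + 1 := by exact_mod_cast hn1
      have hr2 : (2 * j + 2 : ℝ) ≤ R + ℓ := by exact_mod_cast hn2
      refine ⟨by omega, by linarith, by linarith⟩
    have := Finset.card_le_card hsub
    rw [Nat.card_Ico] at this
    omega

lemma sum_range_add' {M : Type*} [AddCommMonoid M] (f : ℕ → M) (m n : ℕ) :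
    ∑ q ∈ range (m + n), f q = ∑ q ∈ range m, f q + ∑ q ∈ range n, f (m + q) := by
  induction n with
  | zero => simp
  | succ n ih =>
    rw [show m + (n + 1) = (m + n) + 1 by omega, Finset.sum_range_succ, ih,
      Finset.sum_range_succ, add_assoc]

lemma grid_split (g : ℕ → ℕ → ℕ) (R K : ℕ) :
    ∑ j ∈ range (R + 1), ∑ i ∈ range (K + 1), g j i
      = ∑ j ∈ range R, ∑ i ∈ range K, g j i
        + ∑ q ∈ range (R + 1 + K), (if q ≤ R then g q K else g R (R + K - q)) := by
  have h1 : ∑ q ∈ range (R + 1 + K), (if q ≤ R then g q K else g R (R + K - q))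
      = ∑ j ∈ range (R + 1), g j K + ∑ i ∈ range K, g R i := by
    rw [sum_range_add']
    congr 1
    · apply Finset.sum_congr rfl
      intro q hq
      rw [Finset.mem_range] at hq
      rw [if_pos (by omega)]
    · rw [← Finset.sum_range_reflect (fun i => g R i) K]
      apply Finset.sum_congr rfl
      intro q hq
      rw [Finset.mem_range] at hq
      rw [if_neg (by omega)]
      congr 1
      omega
  rw [h1]
  have h2 : ∀ j, ∑ i ∈ range (K + 1), g j i = ∑ i ∈ range K, g j i + g j K :=
    fun j => Finset.sum_range_succ _ _
  calc ∑ j ∈ range (R + 1), ∑ i ∈ range (K + 1), g j i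
      = ∑ j ∈ range (R + 1), (∑ i ∈ range K, g j i + g j K) := by
        exact Finset.sum_congr rfl fun j _ => h2 j
    _ = ∑ j ∈ range (R + 1), ∑ i ∈ range K, g j i + ∑ j ∈ range (R + 1), g j K := by
        rw [Finset.sum_add_distrib]
    _ = (∑ j ∈ range R, ∑ i ∈ range K, g j i + ∑ i ∈ range K, g R i)
          + ∑ j ∈ range (R + 1), g j K := by rw [Finset.sum_range_succ]
    _ = _ := by omega

lemma grid (N M : ℝ → ℕ)
    (HN : ∀ (R : ℕ) (c : ℕ → ℝ), Sep c R →
      (range R).sum (fun j : ℕ => N (c j)) ≤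
      (range R).sum (fun j : ℕ => M (2 * (j : ℝ) - R + 1))) :
    ∀ (K R : ℕ) (a c : ℕ → ℝ), Sep a K → Sep c R →
      (range R).sum (fun j : ℕ => (range K).sum (fun i : ℕ => N (c j - a i))) ≤
      (range R).sum (fun j : ℕ => (range K).sum
        (fun i : ℕ => M (2 * (j : ℝ) - 2 * i + K - R))) := by
  intro K
  induction K with
  | zero => simp
  | succ K ihK =>
    intro R a c ha hc
    match R with
    | 0 => simp
    | R + 1 =>
      -- the hook centers
      set e : ℕ → ℝ := fun q => if q ≤ R then c q - a K else c R - a (R + K - q) with he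
      have hesep : Sep e (R + 1 + K) := by
        intro q hq
        rcases le_or_gt (q + 1) R with h1 | h1
        · rw [he]
          simp only
          rw [if_pos h1, if_pos (by omega)]
          have := hc q (by omega)
          linarith
        · rcases le_or_gt q R with h2 | h2
          · -- q = R
            have hqR : q = R := by omega
            have hK1 : 1 ≤ K := by omega
            rw [he]
            simp only
            rw [if_pos h2, if_neg (by omega), hqR]
            have h3 : R + K - (R + 1) = K - 1 := by omega
            rw [h3]
            have := ha (K - 1) (by omega)
            rw [show K - 1 + 1 = K by omega] at this
            linarith
          · rw [he]
            simp only
            rw [if_neg (by omega), if_neg (by omega)]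
            have h4 : R + K - q = (R + K - (q + 1)) + 1 := by omega
            have := ha (R + K - (q + 1)) (by omega)
            rw [← h4] at this
            linarith
      -- split LHS
      have hL := grid_split (fun j i => N (c j - a i)) R K
      have hR' := grid_split (fun j i => M (2 * (j : ℝ) - 2 * i + (K + 1 : ℕ) - (R + 1 : ℕ))) R K
      -- hook LHS as N ∘ e
      have hookL : ∑ q ∈ range (R + 1 + K),
            (if q ≤ R then N (c q - a K) else N (c R - a (R + K - q)))
          = (range (R + 1 + K)).sum (fun q : ℕ => N (e q)) := by
        apply Finset.sum_congr rfl
        intro q _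
        rw [he]
        simp only
        split_ifs <;> rfl
      -- hook RHS values
      have hookR : ∑ q ∈ range (R + 1 + K),
            (if q ≤ R then M (2 * (q : ℝ) - 2 * K + (K + 1 : ℕ) - (R + 1 : ℕ))
              else M (2 * (R : ℝ) - 2 * (R + K - q : ℕ) + (K + 1 : ℕ) - (R + 1 : ℕ)))
          = (range (R + 1 + K)).sum (fun q : ℕ => M (2 * (q : ℝ) - (R + 1 + K : ℕ) + 1)) := by
        apply Finset.sum_congr rfl
        intro q hq
        rw [Finset.mem_range] at hq
        split_ifs with h
        · congr 1
          push_cast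
          ring
        · congr 1
          rw [Nat.cast_sub (by omega : q ≤ R + K)]
          push_cast
          ring
      -- subgrid congruence on RHS
      have hsubR : (range R).sum (fun j : ℕ => (range K).sum
            (fun i : ℕ => M (2 * (j : ℝ) - 2 * i + (K + 1 : ℕ) - (R + 1 : ℕ))))
          = (range R).sum (fun j : ℕ => (range K).sum
            (fun i : ℕ => M (2 * (j : ℝ) - 2 * i + K - R))) := by
        apply Finset.sum_congr rfl
        intro j _
        apply Finset.sum_congr rfl
        intro i _
        congr 1
        push_cast
        ring
      rw [hL, hR', hookR, hsubR]
      have hsub := ihK R a c (ha.mono (by omega)) (hc.mono (by omega))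
      have hhook := HN (R + 1 + K) e hesep
      rw [← hookL] at hhook
      omega

lemma exists_enum (t : Finset ℝ) (hsep : ∀ a ∈ t, ∀ b ∈ t, a ≠ b → 2 ≤ |a - b|) :
    ∃ a : ℕ → ℝ, Sep a t.card ∧ Set.InjOn a (range t.card) ∧ (range t.card).image a = t := by
  classical
  set e := t.orderIsoOfFin rfl with he
  refine ⟨fun i => if h : i < t.card then (e ⟨i, h⟩ : ℝ) else 0, ?_, ?_, ?_⟩
  · intro q hq
    have h1 : q < t.card := by omega
    have h2 : q + 1 < t.card := hq
    simp only [dif_pos h1, dif_pos h2]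
    have hlt : (e ⟨q, h1⟩ : ℝ) < (e ⟨q + 1, h2⟩ : ℝ) := by
      have : (⟨q, h1⟩ : Fin t.card) < ⟨q + 1, h2⟩ := by simp [Fin.lt_def]
      exact e.strictMono this
    have hmem1 : (e ⟨q, h1⟩ : ℝ) ∈ t := (e ⟨q, h1⟩).2
    have hmem2 : (e ⟨q + 1, h2⟩ : ℝ) ∈ t := (e ⟨q + 1, h2⟩).2
    have hne : (e ⟨q, h1⟩ : ℝ) ≠ (e ⟨q + 1, h2⟩ : ℝ) := ne_of_lt hlt
    have h2le := hsep _ hmem1 _ hmem2 hne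
    rw [abs_of_neg (by linarith : (e ⟨q, h1⟩ : ℝ) - (e ⟨q + 1, h2⟩ : ℝ) < 0)] at h2le
    linarith
  · intro i hi j hj hij
    simp only [Finset.coe_range, Set.mem_Iio] at hi hj
    simp only [dif_pos hi, dif_pos hj] at hij
    by_contra hne
    rcases Nat.lt_or_ge i j with h | h
    · have : (⟨i, hi⟩ : Fin t.card) < ⟨j, hj⟩ := by simpa [Fin.lt_def]
      exact absurd hij (ne_of_lt (e.strictMono this))
    · have hij' : j < i := by omega
      have : (⟨j, hj⟩ : Fin t.card) < ⟨i, hi⟩ := by simpa [Fin.lt_def]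
      exact absurd hij.symm (ne_of_lt (e.strictMono this))
  · apply Finset.eq_of_subset_of_card_le
    · intro y hy
      rw [Finset.mem_image] at hy
      obtain ⟨i, hi, rfl⟩ := hy
      rw [Finset.mem_range] at hi
      simp only [dif_pos hi]
      exact (e ⟨i, hi⟩).2
    · rw [Finset.card_image_of_injOn, Finset.card_range]
      · intro i hi j hj hij
        simp only [Finset.coe_range, Set.mem_Iio] at hi hj
        simp only [dif_pos hi, dif_pos hj] at hij
        by_contra hne
        rcases Nat.lt_or_ge i j with h | h
        · have : (⟨i, hi⟩ : Fin t.card) < ⟨j, hj⟩ := by simpa [Fin.lt_def]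
          exact absurd hij (ne_of_lt (e.strictMono this))
        · have hij' : j < i := by omega
          have : (⟨j, hj⟩ : Fin t.card) < ⟨i, hi⟩ := by simpa [Fin.lt_def]
          exact absurd hij.symm (ne_of_lt (e.strictMono this))

lemma key (ℓ : ℕ) (hℓ : 1 ≤ ℓ) :
    ∀ (n : ℕ) (s : Fin n → Finset ℝ),
      (∀ i, ∀ a ∈ s i, ∀ b ∈ s i, a ≠ b → 2 ≤ |a - b|) →
      ∀ (R : ℕ) (c : ℕ → ℝ), Sep c R →
      (range R).sum (fun j : ℕ => cnt ℓ n s (c j)) ≤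
      (range R).sum (fun j : ℕ =>
        cnt ℓ n (fun i => APset ((s i).card)) (2 * (j : ℝ) - R + 1)) := by
  intro n
  induction n with
  | zero =>
    intro s _ R c hc
    simp only [cnt_zero]
    exact le_trans (base_le hℓ hc) (base_ge hℓ)
  | succ n ih =>
    intro s hsep R c hcR
    classical
    obtain ⟨a, ha_sep, ha_inj, ha_img⟩ := exists_enum (s 0) (hsep 0)
    have HN : ∀ (R' : ℕ) (c' : ℕ → ℝ), Sep c' R' →
        (range R').sum (fun j : ℕ => cnt ℓ n (fun i => s i.succ) (c' j)) ≤
        (range R').sum (fun j : ℕ =>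
          cnt ℓ n (fun i => APset ((s i.succ).card)) (2 * (j : ℝ) - R' + 1)) :=
      fun R' c' hc' => ih (fun i => s i.succ) (fun i => hsep i.succ) R' c' hc'
    have hgrid := grid (fun x => cnt ℓ n (fun i => s i.succ) x)
      (fun x => cnt ℓ n (fun i => APset ((s i.succ).card)) x) HN ((s 0).card) R a c ha_sep hcR
    have hLHS : (range R).sum (fun j : ℕ => cnt ℓ (n + 1) s (c j))
        = (range R).sum (fun j : ℕ => (range ((s 0).card)).sum
            (fun i : ℕ => cnt ℓ n (fun i' => s i'.succ) (c j - a i))) := by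
      apply Finset.sum_congr rfl
      intro j _
      rw [cnt_succ]
      conv_lhs => rw [← ha_img]
      rw [Finset.sum_image (fun x hx y hy hxy => ha_inj
        (by simpa using hx) (by simpa using hy) hxy)]
    have hRHS : (range R).sum (fun j : ℕ =>
          cnt ℓ (n + 1) (fun i => APset ((s i).card)) (2 * (j : ℝ) - R + 1))
        = (range R).sum (fun j : ℕ => (range ((s 0).card)).sum
            (fun i : ℕ => cnt ℓ n (fun i' => APset ((s i'.succ).card))
              (2 * (j : ℝ) - 2 * i + ((s 0).card : ℝ) - R))) := by
      apply Finset.sum_congr rfl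
      intro j _
      rw [cnt_succ]
      rw [show APset ((s 0).card)
          = (range ((s 0).card)).image (fun i : ℕ => 2 * (i : ℝ) - ((s 0).card : ℝ) + 1)
          from rfl]
      rw [Finset.sum_image (fun x _ y _ hxy => APinj ((s 0).card) hxy)]
      apply Finset.sum_congr rfl
      intro i _
      congr 1
      ring
    rw [hLHS, hRHS]
    exact hgrid

open MeasureTheory

lemma apset_card (k : ℕ) : (APset k).card = k := by
  rw [show APset k = (range k).image (fun i : ℕ => 2 * (i : ℝ) - k + 1) from rfl,
    Finset.card_image_of_injective _ (APinj k), Finset.card_range]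

lemma measurable_sumset {n : ℕ} {S : Set ℝ} (hS : MeasurableSet S) :
    MeasurableSet {y : Fin n → ℝ | (∑ i, y i) ∈ S} := by
  have hm : Measurable (fun y : Fin n → ℝ => ∑ i, y i) :=
    Finset.measurable_sum _ (fun i _ => measurable_pi_apply i)
  exact hm hS

lemma pi_discrete {n : ℕ} (k : Fin n → ℕ) (hk : ∀ i, 1 ≤ k i) (s : Fin n → Finset ℝ)
    (hcard : ∀ i, (s i).card = k i) :
    Measure.pi (fun i => ((k i : ℝ≥0∞))⁻¹ • ∑ y ∈ s i, Measure.dirac y)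
      = (∏ i, (k i : ℝ≥0∞)⁻¹) • ∑ a ∈ Fintype.piFinset s, Measure.dirac a := by
  classical
  have hfin : ∀ i, IsFiniteMeasure (((k i : ℝ≥0∞))⁻¹ • ∑ y ∈ s i, Measure.dirac y) := by
    intro i
    constructor
    rw [Measure.smul_apply, smul_eq_mul, Measure.finset_sum_apply]
    simp only [Measure.dirac_apply' _ MeasurableSet.univ, Set.indicator_univ, Pi.one_apply,
      Finset.sum_const, smul_eq_mul, mul_one]
    refine ENNReal.mul_lt_top ?_ (by simp)
    exact ENNReal.inv_lt_top.mpr (by exact_mod_cast hk i)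
  haveI : ∀ i, SigmaFinite (((k i : ℝ≥0∞))⁻¹ • ∑ y ∈ s i, Measure.dirac y) :=
    fun i => @IsFiniteMeasure.toSigmaFinite _ _ _ (hfin i)
  refine Measure.pi_eq (μ := fun i => ((k i : ℝ≥0∞))⁻¹ • ∑ y ∈ s i, Measure.dirac y)
    (fun B hB => ?_)
  rw [Measure.smul_apply, smul_eq_mul, Measure.finset_sum_apply]
  have hleft : ∀ a ∈ Fintype.piFinset s,
      Measure.dirac a (Set.pi Set.univ B) = if (∀ i, a i ∈ B i) then (1 : ℝ≥0∞) else 0 := by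
    intro a _
    rw [Measure.dirac_apply' _ (MeasurableSet.univ_pi hB), Set.indicator_apply]
    simp [Set.mem_univ_pi]
  rw [Finset.sum_congr rfl hleft]
  have hright : ∀ i, (((k i : ℝ≥0∞))⁻¹ • ∑ y ∈ s i, Measure.dirac y) (B i)
      = (k i : ℝ≥0∞)⁻¹ * ∑ y ∈ s i, (if y ∈ B i then (1 : ℝ≥0∞) else 0) := by
    intro i
    rw [Measure.smul_apply, smul_eq_mul, Measure.finset_sum_apply]
    congr 1
    refine Finset.sum_congr rfl (fun y _ => ?_)
    rw [Measure.dirac_apply' _ (hB i), Set.indicator_apply]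
    simp
  rw [Finset.prod_congr rfl (fun i _ => hright i), Finset.prod_mul_distrib,
    Finset.prod_univ_sum]
  congr 1
  refine Finset.sum_congr rfl (fun a _ => ?_)
  by_cases h : ∀ i, a i ∈ B i
  · rw [if_pos h]
    have hone : ∀ i ∈ Finset.univ, (if a i ∈ B i then (1 : ℝ≥0∞) else 0) = 1 :=
      fun i _ => if_pos (h i)
    rw [Finset.prod_congr rfl hone, Finset.prod_const_one]
  · rw [if_neg h]
    push_neg at h
    obtain ⟨i, hi⟩ := h
    symm
    apply Finset.prod_eq_zero (Finset.mem_univ i)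
    exact if_neg hi

lemma sum_dirac_cnt {n : ℕ} (s : Fin n → Finset ℝ) (ℓ : ℕ) (c : ℝ) :
    (∑ a ∈ Fintype.piFinset s, Measure.dirac a)
        {y : Fin n → ℝ | (∑ i, y i) ∈ Set.Ioc (c - ℓ) (c + ℓ)}
      = (cnt ℓ n s c : ℝ≥0∞) := by
  classical
  rw [Measure.finset_sum_apply, cnt]
  rw [Nat.cast_sum]
  refine Finset.sum_congr rfl (fun a _ => ?_)
  rw [Measure.dirac_apply' _ (measurable_sumset measurableSet_Ioc), Set.indicator_apply]
  simp only [Set.mem_setOf_eq, Pi.one_apply]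
  split_ifs <;> simp

end USC



open MeasureTheory ProbabilityTheory
open scoped ENNReal NNReal

/-- If X₁,…,Xₙ are independent, Xᵢ uniform on kᵢ points pairwise at distance ≥ 2, then
P(∑Xᵢ ∈ (x-ℓ, x+ℓ]) ≤ P(∑Tᵢ ∈ (-ℓ, ℓ]) where Tᵢ are independent, Tᵢ ~ ν^{kᵢ}. -/
theorem uniform_separated_concentration {Ω : Type*} [MeasurableSpace Ω]
    (P : Measure Ω) [IsProbabilityMeasure P]
    (n : ℕ) (k : Fin n → ℕ) (hk : ∀ i, 1 ≤ k i)
    (X : Fin n → Ω → ℝ) (hmeas : ∀ i, Measurable (X i))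
    (hindep : iIndepFun X P)
    (hunif : ∀ i, ∃ s : Finset ℝ, s.card = k i ∧
      (∀ a ∈ s, ∀ b ∈ s, a ≠ b → 2 ≤ |a - b|) ∧
      P.map (X i) = ((k i : ℝ≥0∞))⁻¹ • ∑ y ∈ s, Measure.dirac y)
    (ℓ : ℕ) (hℓ : 1 ≤ ℓ) (x : ℝ) :
    P {ω | (∑ i, X i ω) ∈ Set.Ioc (x - ℓ) (x + ℓ)} ≤
      (Measure.pi fun i => nu (k i)) {y | (∑ i, y i) ∈ Set.Ioc (-(ℓ : ℝ)) ℓ} := by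
    classical
  choose s hcard hsep hmap using hunif
  have hF : Measurable (fun ω => fun i => X i ω) :=
    measurable_pi_lambda _ (fun i => hmeas i)
  haveI : ∀ i, IsProbabilityMeasure (P.map (X i)) :=
    fun i => Measure.isProbabilityMeasure_map (hmeas i).aemeasurable
  have hjoint : Measure.pi (fun i => P.map (X i)) = P.map (fun ω => fun i => X i ω) := by
    refine Measure.pi_eq (fun B hB => ?_)
    rw [Measure.map_apply hF (MeasurableSet.univ_pi hB)]
    have hpre : (fun ω => fun i => X i ω) ⁻¹' (Set.univ.pi B) = ⋂ i, X i ⁻¹' B i := by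
      ext ω; simp [Set.mem_univ_pi]
    rw [hpre, hindep.meas_iInter (fun i => ⟨B i, hB i, rfl⟩)]
    exact Finset.prod_congr rfl (fun i _ => (Measure.map_apply (hmeas i) (hB i)).symm)
  have hA : MeasurableSet {y : Fin n → ℝ | (∑ i, y i) ∈ Set.Ioc (x - ℓ) (x + ℓ)} :=
    USC.measurable_sumset measurableSet_Ioc
  have hLHS : P {ω | (∑ i, X i ω) ∈ Set.Ioc (x - ℓ) (x + ℓ)}
      = (∏ i, (k i : ℝ≥0∞)⁻¹) * (USC.cnt ℓ n s x : ℝ≥0∞) := by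
    have h1 : P {ω | (∑ i, X i ω) ∈ Set.Ioc (x - ℓ) (x + ℓ)}
        = (P.map (fun ω => fun i => X i ω))
            {y : Fin n → ℝ | (∑ i, y i) ∈ Set.Ioc (x - ℓ) (x + ℓ)} := by
      rw [Measure.map_apply hF hA]
      rfl
    rw [h1, ← hjoint]
    have h2 : (fun i => P.map (X i))
        = fun i => ((k i : ℝ≥0∞))⁻¹ • ∑ y ∈ s i, Measure.dirac y := funext hmap
    rw [h2, USC.pi_discrete k hk s hcard, Measure.smul_apply, smul_eq_mul,
      USC.sum_dirac_cnt s ℓ x]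
  have hnu : (fun (i : Fin n) => nu (k i))
      = fun i => ((k i : ℝ≥0∞))⁻¹ • ∑ y ∈ USC.APset (k i), Measure.dirac y := by
    funext i
    rw [nu]
    congr 1
    rw [show USC.APset (k i)
        = (Finset.range (k i)).image (fun j : ℕ => 2 * (j : ℝ) - (k i) + 1) from rfl]
    rw [Finset.sum_image (fun p _ q _ h => USC.APinj (k i) h)]
  have hRHS : (Measure.pi fun i => nu (k i)) {y : Fin n → ℝ | (∑ i, y i) ∈ Set.Ioc (-(ℓ:ℝ)) ℓ}
      = (∏ i, (k i : ℝ≥0∞)⁻¹) * (USC.cnt ℓ n (fun i => USC.APset (k i)) 0 : ℝ≥0∞) := by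
    rw [hnu, USC.pi_discrete k hk (fun i => USC.APset (k i)) (fun i => USC.apset_card (k i)),
      Measure.smul_apply, smul_eq_mul]
    congr 1
    rw [show Set.Ioc (-(ℓ:ℝ)) (ℓ:ℝ) = Set.Ioc ((0:ℝ) - ℓ) ((0:ℝ) + ℓ) by norm_num]
    exact USC.sum_dirac_cnt _ ℓ 0
  rw [hLHS, hRHS]
  apply mul_le_mul_right
  have hkey := USC.key ℓ hℓ n s hsep 1 (fun _ => x) (fun q hq => absurd hq (by omega))
  rw [Finset.sum_range_one, Finset.sum_range_one] at hkey
  rw [show (2 * ((0:ℕ) : ℝ) - (1:ℕ) + 1) = 0 by norm_num] at hkey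
  simp only [hcard] at hkey
  exact_mod_cast hkey
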